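/- Every connected undirected graph G other than K₂ (with at least one vertex) admits a boolean function f : {0,1}ⁿ → {0,1}ⁿ whose interaction digraph, forgetting signs, is the symmetric digraph of G, and such that f³ is constant. The graph K₂ (single edge on two vertices) admits no nilpotent boolean function. -/

import Mathlib

/-- `f i` depends essentially on coordinate `j` (boolean states). -/
def dependsB {n : ℕ} (f : (Fin n → Bool) → (Fin n → Bool)) (j i : Fin n) : Prop :=
  ∃ x y : Fin n → Bool, (∀ k, k ≠ j → x k = y k) ∧ f x i ≠ f y i

/-- every connected graph on `n ≥ 1` vertices other than `K₂` (i.e. `n ≠ 2`)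
admits a boolean function whose interaction digraph is the symmetric digraph of the graph and
whose cube is constant; for `K₂` (i.e. `n = 2`, where connectedness forces the single edge),
no such boolean function is nilpotent. -/
theorem stmt15 (n : ℕ) (hn : 0 < n) (G : SimpleGraph (Fin n)) (hconn : G.Connected) :
    (n ≠ 2 → ∃ f : (Fin n → Bool) → (Fin n → Bool),
      (∀ j i, dependsB f j i ↔ G.Adj j i) ∧ ∃ c, f^[3] = Function.const _ c) ∧
    (n = 2 → ∀ f : (Fin n → Bool) → (Fin n → Bool),
      (∀ j i, dependsB f j i ↔ G.Adj j i) →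
      ¬ ∃ (k : ℕ) (c : Fin n → Bool), f^[k] = Function.const _ c) := by
  classical
  constructor
  · -- Part 1 : n ≠ 2
    intro hne
    -- small-degree predicate : at most one neighbour
    set Dp : Fin n → Prop := fun v => ∀ u w, G.Adj v u → G.Adj v w → u = w with hDpdef
    -- vertices satisfying Dp form an independent set
    have hDindep : ∀ u v, Dp u → Dp v → G.Adj u v → False := by
      intro u v hu hv huv
      have hclos : ∀ (x y : Fin n), G.Walk x y → (x = u ∨ x = v) → (y = u ∨ y = v) := by
        intro x y p
        induction p with
        | nil => exact id
        | cons h q ih =>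
          intro hx
          apply ih
          rcases hx with rfl | rfl
          · right; exact hu _ _ h huv
          · left; exact hv _ _ h (G.adj_symm huv)
      have hall : ∀ x : Fin n, x = u ∨ x = v := by
        intro x
        obtain ⟨p⟩ := hconn.preconnected u x
        exact hclos u x p (Or.inl rfl)
      have hne' : u ≠ v := G.ne_of_adj huv
      have h1 : (Finset.univ : Finset (Fin n)) ⊆ {u, v} := by
        intro x _
        rcases hall x with rfl | rfl <;> simp
      have h2 : n ≤ 2 := by
        calc n = (Finset.univ : Finset (Fin n)).card := by simp
        _ ≤ ({u, v} : Finset (Fin n)).card := Finset.card_le_card h1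
        _ ≤ 2 := Finset.card_insert_le u {v}
      have h3 : 2 ≤ n := by
        have : ({u, v} : Finset (Fin n)).card ≤ (Finset.univ : Finset (Fin n)).card :=
          Finset.card_le_card (Finset.subset_univ _)
        have hcard : ({u, v} : Finset (Fin n)).card = 2 := by
          rw [Finset.card_insert_of_notMem (by simpa using hne'), Finset.card_singleton]
        simp only [Finset.card_univ, Fintype.card_fin] at this
        omega
      omega
    -- a maximal independent set containing all small-degree vertices
    set D : Finset (Fin n) := Finset.univ.filter Dp with hDdef
    set P : Finset (Fin n) → Prop :=
      fun s => (∀ a ∈ s, ∀ b ∈ s, a ≠ b → ¬ G.Adj a b) ∧ D ⊆ s with hPdef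
    have hPD : P D := by
      constructor
      · intro a ha b hb hab hadj
        exact hDindep a b (by simpa [hDdef] using ha) (by simpa [hDdef] using hb) hadj
      · exact Finset.Subset.refl D
    obtain ⟨I, hImem, hImax⟩ :=
      Finset.exists_max_image (Finset.univ.powerset.filter P) Finset.card
        ⟨D, Finset.mem_filter.2 ⟨Finset.mem_powerset.2 (Finset.subset_univ _), hPD⟩⟩
    have hIP : P I := by
      have := (Finset.mem_filter.1 hImem).2
      exact this
    have hImax' : ∀ J, P J → J.card ≤ I.card := by
      intro J hJ
      exact hImax J (Finset.mem_filter.2 ⟨Finset.mem_powerset.2 (Finset.subset_univ _), hJ⟩)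
    -- every vertex outside I has a neighbour inside I
    have hdom : ∀ v, v ∉ I → ∃ u ∈ I, G.Adj v u := by
      intro v hv
      by_contra hno
      push_neg at hno
      have hPI' : P (insert v I) := by
        constructor
        · intro a ha b hb hab
          rcases Finset.mem_insert.1 ha with rfl | ha'
          · rcases Finset.mem_insert.1 hb with rfl | hb'
            · exact absurd rfl hab
            · exact hno b hb'
          · rcases Finset.mem_insert.1 hb with rfl | hb'
            · intro h; exact hno a ha' (G.adj_symm h)
            · exact hIP.1 a ha' b hb' hab
        · exact hIP.2.trans (Finset.subset_insert _ _)
      have hle := hImax' _ hPI'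
      rw [Finset.card_insert_of_notMem hv] at hle
      omega
    -- every vertex outside I has two distinct neighbours, one inside I
    have hchoice : ∀ v, v ∉ I → ∃ p : Fin n × Fin n,
        G.Adj v p.2 ∧ p.2 ∈ I ∧ G.Adj v p.1 ∧ p.1 ≠ p.2 := by
      intro v hv
      obtain ⟨b, hbI, hvb⟩ := hdom v hv
      have hnotDp : ¬ ∀ u w, G.Adj v u → G.Adj v w → u = w := by
        intro h
        exact hv (hIP.2 (by rw [hDdef]; exact Finset.mem_filter.2 ⟨Finset.mem_univ v, h⟩))
      push_neg at hnotDp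
      obtain ⟨u, w, hu, hw, huw⟩ := hnotDp
      by_cases hub : u = b
      · exact ⟨(w, b), hvb, hbI, hw, by rw [← hub]; exact Ne.symm huw⟩
      · exact ⟨(u, b), hvb, hbI, hu, hub⟩
    choose AB hAB1 hAB2 hAB3 hAB4 using hchoice
    set B : Fin n → Fin n := fun v => if h : v ∈ I then v else (AB v h).2 with hBdef
    set A : Fin n → Fin n := fun v => if h : v ∈ I then v else (AB v h).1 with hAdef
    have hB_adj : ∀ v, (hv : v ∉ I) → G.Adj v (B v) := by
      intro v hv; rw [hBdef]; simp only [dif_neg hv]; exact hAB1 v hv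
    have hB_I : ∀ v, (hv : v ∉ I) → B v ∈ I := by
      intro v hv; rw [hBdef]; simp only [dif_neg hv]; exact hAB2 v hv
    have hA_adj : ∀ v, (hv : v ∉ I) → G.Adj v (A v) := by
      intro v hv; rw [hAdef]; simp only [dif_neg hv]; exact hAB3 v hv
    have hAB_ne : ∀ v, (hv : v ∉ I) → A v ≠ B v := by
      intro v hv; rw [hAdef, hBdef]; simp only [dif_neg hv]; exact hAB4 v hv
    -- the sign pattern and the boolean network
    set w : Fin n → Fin n → Bool :=
      fun p q => if q ∉ I ∧ p = B q then false else true with hwdef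
    set f : (Fin n → Bool) → (Fin n → Bool) :=
      fun x i => decide (∀ j, G.Adj i j → x j = w i j) with hfdef
    have ftrue : ∀ (x : Fin n → Bool) (i : Fin n),
        f x i = true ↔ ∀ j, G.Adj i j → x j = w i j := by
      intro x i
      simp only [hfdef]
      exact decide_eq_true_iff
    -- values of the pattern
    have wA : ∀ i, (hi : i ∉ I) → w i (A i) = true := by
      intro i hi
      simp only [hwdef]
      rw [if_neg]
      rintro ⟨hAI, hiB⟩
      exact absurd (hiB ▸ hB_I (A i) hAI) hi
    have wB1 : ∀ i, (hi : i ∉ I) → w i (B i) = true := by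
      intro i hi
      simp only [hwdef]
      rw [if_neg]
      rintro ⟨hBI, -⟩
      exact hBI (hB_I i hi)
    have wBi : ∀ i, (hi : i ∉ I) → w (B i) i = false := by
      intro i hi
      simp [hwdef, hi]
    have wAi : ∀ i, (hi : i ∉ I) → w (A i) i = true := by
      intro i hi
      simp only [hwdef]
      rw [if_neg]
      rintro ⟨-, hAB⟩
      exact absurd hAB (hAB_ne i hi)
    -- key lemma : outside I everything is false from time 2 on
    have LemA : ∀ (x : Fin n → Bool) (i : Fin n), i ∉ I → f (f x) i = false := by
      intro x i hi
      by_contra h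
      rw [Bool.not_eq_false, ftrue] at h
      have hA1 : f x (A i) = true := by rw [h (A i) (hA_adj i hi)]; exact wA i hi
      have hB1 : f x (B i) = true := by rw [h (B i) (hB_adj i hi)]; exact wB1 i hi
      rw [ftrue] at hA1 hB1
      have hxiA : x i = true := by
        rw [hA1 i (G.adj_symm (hA_adj i hi))]; exact wAi i hi
      have hxiB : x i = false := by
        rw [hB1 i (G.adj_symm (hB_adj i hi))]; exact wBi i hi
      rw [hxiA] at hxiB
      simp at hxiB
    refine ⟨f, ?_, ?_⟩
    · -- dependencies
      intro j i
      constructor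
      · rintro ⟨x, y, hxy, hne'⟩
        by_contra hadj
        apply hne'
        simp only [hfdef]
        rw [decide_eq_decide]
        have hxyj : ∀ j', G.Adj i j' → x j' = y j' := by
          intro j' hj'
          apply hxy
          intro hj
          exact hadj (G.adj_symm (hj ▸ hj'))
        constructor <;> intro h j' hj'
        · rw [← hxyj j' hj']; exact h j' hj'
        · rw [hxyj j' hj']; exact h j' hj'
      · intro hadj
        refine ⟨Function.update (fun j' => w i j') j (!(w i j)), fun j' => w i j', ?_, ?_⟩
        · intro k hk
          exact Function.update_of_ne hk _ _
        · have hy : f (fun j' => w i j') i = true := by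
            rw [ftrue]; intro j' _; rfl
          have hx : f (Function.update (fun j' => w i j') j (!(w i j))) i = false := by
            simp only [hfdef]
            rw [decide_eq_false_iff_not]
            intro h
            have := h j (G.adj_symm hadj)
            rw [Function.update_self] at this
            exact (Bool.not_ne_self (w i j)) this
          rw [hx, hy]
          simp
    · -- the cube is constant
      refine ⟨fun i => if i ∈ I then decide (∀ j, G.Adj i j → false = w i j) else false, ?_⟩
      funext x
      show f (f (f x)) = _
      funext i
      simp only [Function.const_apply]
      by_cases hi : i ∈ I
      · rw [if_pos hi]
        have hall : ∀ j, G.Adj i j → f (f x) j = false := by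
          intro j hj
          apply LemA
          intro hjI
          exact hIP.1 i hi j hjI (G.ne_of_adj hj) hj
        have hstep : f (f (f x)) i = decide (∀ j, G.Adj i j → f (f x) j = w i j) := rfl
        rw [hstep, decide_eq_decide]
        constructor <;> intro h j hj
        · rw [← hall j hj]; exact h j hj
        · rw [hall j hj]; exact h j hj
      · rw [if_neg hi]
        exact LemA (f x) i hi
  · -- Part 2 : n = 2
    intro h2 f hdep
    subst h2
    rintro ⟨k, c, hk⟩
    -- the unique edge
    have h01 : G.Adj 0 1 := by
      have hkey : ∀ (u v : Fin 2), G.Walk u v → u ≠ v → G.Adj 0 1 := by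
        intro u v p
        induction p with
        | nil => intro h; exact absurd rfl h
        | @cons a b v' h q ih =>
          intro _
          have hab := G.ne_of_adj h
          fin_cases a <;> fin_cases b
          · exact absurd rfl hab
          · exact h
          · exact G.adj_symm h
          · exact absurd rfl hab
      obtain ⟨p⟩ := hconn.preconnected 0 1
      exact hkey 0 1 p (by decide)
    have hd00 : ¬ dependsB f 0 0 := by rw [hdep]; exact fun h => G.irrefl h
    have hd11 : ¬ dependsB f 1 1 := by rw [hdep]; exact fun h => G.irrefl h
    have hd10 : dependsB f 1 0 := (hdep 1 0).2 (G.adj_symm h01)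
    have hd01 : dependsB f 0 1 := (hdep 0 1).2 h01
    have h0only : ∀ x y : Fin 2 → Bool, x 1 = y 1 → f x 0 = f y 0 := by
      intro x y hxy1
      by_contra hne'
      refine hd00 ⟨x, y, ?_, hne'⟩
      intro k' hk'
      fin_cases k'
      · exact absurd rfl hk'
      · exact hxy1
    have h1only : ∀ x y : Fin 2 → Bool, x 0 = y 0 → f x 1 = f y 1 := by
      intro x y hxy0
      by_contra hne'
      refine hd11 ⟨x, y, ?_, hne'⟩
      intro k' hk'
      fin_cases k'
      · exact hxy0
      · exact absurd rfl hk'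
    set g : Bool → Bool := fun t => f (fun _ => t) 0 with hgdef
    set gg : Bool → Bool := fun t => f (fun _ => t) 1 with hggdef
    have hgx : ∀ x : Fin 2 → Bool, f x 0 = g (x 1) := fun x => h0only x (fun _ => x 1) rfl
    have hggx : ∀ x : Fin 2 → Bool, f x 1 = gg (x 0) := fun x => h1only x (fun _ => x 0) rfl
    have hgne : g true ≠ g false := by
      obtain ⟨x, y, hxy, hne'⟩ := hd10
      have h' : g (x 1) ≠ g (y 1) := by rw [← hgx, ← hgx]; exact hne'
      have hx1 : x 1 ≠ y 1 := fun h => h' (by rw [h])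
      cases hb : x 1 <;> cases hc : y 1
      · exact absurd (hb.trans hc.symm) hx1
      · rw [hb, hc] at h'; exact h'.symm
      · rw [hb, hc] at h'; exact h'
      · exact absurd (hb.trans hc.symm) hx1
    have hggne : gg true ≠ gg false := by
      obtain ⟨x, y, hxy, hne'⟩ := hd01
      have h' : gg (x 0) ≠ gg (y 0) := by rw [← hggx, ← hggx]; exact hne'
      have hx0 : x 0 ≠ y 0 := fun h => h' (by rw [h])
      cases hb : x 0 <;> cases hc : y 0
      · exact absurd (hb.trans hc.symm) hx0
      · rw [hb, hc] at h'; exact h'.symm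
      · rw [hb, hc] at h'; exact h'
      · exact absurd (hb.trans hc.symm) hx0
    have ginj : ∀ s t : Bool, g s = g t → s = t := by
      intro s t hst
      cases s <;> cases t
      · rfl
      · exact absurd hst.symm hgne
      · exact absurd hst hgne
      · rfl
    have gginj : ∀ s t : Bool, gg s = gg t → s = t := by
      intro s t hst
      cases s <;> cases t
      · rfl
      · exact absurd hst.symm hggne
      · exact absurd hst hggne
      · rfl
    have finj : Function.Injective f := by
      intro x y hxy
      have e1 : x 1 = y 1 := ginj _ _ (by rw [← hgx x, ← hgx y, hxy])
      have e0 : x 0 = y 0 := gginj _ _ (by rw [← hggx x, ← hggx y, hxy])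
      funext kk
      fin_cases kk
      · exact e0
      · exact e1
    have hiter : Function.Injective f^[k] := finj.iterate k
    have h1 := congrFun hk (fun _ => true)
    have h2' := congrFun hk (fun _ => false)
    have heq : (fun _ => true : Fin 2 → Bool) = (fun _ => false) :=
      hiter (h1.trans h2'.symm)
    have := congrFun heq 0
    simp at this
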